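/- In the annotated bicluster editing problem, assigning each vertex v ∈ B to a part A_i minimizing cost_i(v) = |A_i \ N(v)| + |N(v) \ A_i| yields an optimal solution: the minimum total number of edge edits needed to turn the bipartite graph G = (A, B, E) into a disjoint union of p complete bipartite graphs where the i-th has left side exactly A_i equals the sum over v ∈ B of min_i cost_i(v). -/

import Mathlib

open SimpleGraph

/-- The graph obtained from `G` by toggling (adding/deleting) the edges in `F`. -/
def editedGraph {V : Type*} (G : SimpleGraph V) (F : Set (Sym2 V)) : SimpleGraph V :=
  SimpleGraph.fromEdgeSet (symmDiff G.edgeSet F)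

/-- A graph is a starforest: every connected component is a star, i.e. has a center
adjacent to all other vertices of the component, the non-center vertices being
pairwise non-adjacent. -/
def IsStarGraph {V : Type*} (H : SimpleGraph V) : Prop :=
  ∀ c : H.ConnectedComponent, ∃ ctr ∈ c.supp,
    (∀ v ∈ c.supp, v ≠ ctr → H.Adj ctr v) ∧
    (∀ u ∈ c.supp, ∀ v ∈ c.supp, u ≠ ctr → v ≠ ctr → ¬ H.Adj u v)

/-- A graph is a disjoint union of complete `t`-partite graphs: there is a colouring
with at most `t` colours such that two distinct vertices in the same connected
component are adjacent iff they get different colours. -/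
def IsTPartiteCluster {V : Type*} (t : ℕ) (H : SimpleGraph V) : Prop :=
  ∃ f : V → Fin t, ∀ u v : V, u ≠ v → H.Reachable u v → (H.Adj u v ↔ f u ≠ f v)

/-- The target graph for annotated bicluster editing determined by an assignment
`g` of the vertices of `B` to the parts: it is the disjoint union of the complete
bipartite graphs whose left sides are exactly the parts `P i ⊆ A` and whose right
sides are the classes `B_i = {w ∈ B | g w = i}`. -/
def annotTarget {V : Type*} (A B : Finset V) {p : ℕ} (P : Fin p → Finset V)
    (g : V → Fin p) (hdisj : ∀ x : V, ¬ (x ∈ A ∧ x ∈ B)) : SimpleGraph V where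
  Adj u w := (u ∈ A ∧ w ∈ B ∧ u ∈ P (g w)) ∨ (w ∈ A ∧ u ∈ B ∧ w ∈ P (g u))
  symm := ⟨fun u w h => h.symm⟩
  loopless := ⟨fun x h => by
    rcases h with ⟨h1, h2, _⟩ | ⟨h1, h2, _⟩ <;> exact hdisj x ⟨h1, h2⟩⟩


lemma annot_count {V : Type*} [Fintype V] [DecidableEq V]
    (G : SimpleGraph V) [DecidableRel G.Adj] (A B : Finset V)
    (hdisj : ∀ x : V, ¬ (x ∈ A ∧ x ∈ B))
    (hbip : ∀ u w, G.Adj u w → (u ∈ A ∧ w ∈ B) ∨ (u ∈ B ∧ w ∈ A))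
    {p : ℕ} (P : Fin p → Finset V) (hPsub : ∀ i, P i ⊆ A)
    (g : V → Fin p) :
    (symmDiff G.edgeSet (annotTarget A B P g hdisj).edgeSet).ncard
      = ∑ v ∈ B, ((P (g v) \ G.neighborFinset v).card
          + (G.neighborFinset v \ P (g v)).card) := by
  classical
  set T := annotTarget A B P g hdisj with hT
  have hTadj : ∀ u w : V, T.Adj u w ↔
      (u ∈ A ∧ w ∈ B ∧ u ∈ P (g w)) ∨ (w ∈ A ∧ u ∈ B ∧ w ∈ P (g u)) :=
    fun u w => Iff.rfl
  set D : Finset (Sym2 V) :=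
    B.biUnion (fun v => (symmDiff (P (g v)) (G.neighborFinset v)).image (fun u => s(u, v)))
    with hD
  have hN : ∀ v ∈ B, ∀ u ∈ G.neighborFinset v, u ∈ A := by
    intro v hv u hu
    rw [SimpleGraph.mem_neighborFinset] at hu
    rcases hbip v u hu with ⟨h1, h2⟩ | ⟨h1, h2⟩
    · exact absurd ⟨h1, hv⟩ (hdisj v)
    · exact h2
  have hset : symmDiff G.edgeSet T.edgeSet = ↑D := by
    ext e
    induction e using Sym2.ind with
    | _ u w =>
      simp only [Set.mem_symmDiff, SimpleGraph.mem_edgeSet, hD, Finset.coe_biUnion,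
        Set.mem_iUnion, Finset.mem_coe, Finset.mem_image, Finset.mem_symmDiff,
        SimpleGraph.mem_neighborFinset, hTadj]
      constructor
      · rintro (⟨hadj, hne⟩ | ⟨hadj, hne⟩)
        · rcases hbip u w hadj with ⟨hu, hw⟩ | ⟨hu, hw⟩
          · exact ⟨w, hw, u, Or.inr ⟨hadj.symm, fun hP => hne (Or.inl ⟨hu, hw, hP⟩)⟩, rfl⟩
          · exact ⟨u, hu, w, Or.inr ⟨hadj, fun hP => hne (Or.inr ⟨hw, hu, hP⟩)⟩,
              Sym2.eq_swap⟩
        · rcases hadj with ⟨hu, hw, hP⟩ | ⟨hw, hu, hP⟩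
          · exact ⟨w, hw, u, Or.inl ⟨hP, fun h => hne (h.symm)⟩, rfl⟩
          · exact ⟨u, hu, w, Or.inl ⟨hP, fun h => hne h⟩, Sym2.eq_swap⟩
      · rintro ⟨v, hv, x, hx, he⟩
        have hxA : x ∈ A := by
          rcases hx with ⟨h1, _⟩ | ⟨h1, _⟩
          · exact hPsub _ h1
          · exact hN v hv x (by rwa [SimpleGraph.mem_neighborFinset])
        have key : (G.Adj x v ∧ ¬((x ∈ A ∧ v ∈ B ∧ x ∈ P (g v)) ∨
              (v ∈ A ∧ x ∈ B ∧ v ∈ P (g x)))) ∨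
            (((x ∈ A ∧ v ∈ B ∧ x ∈ P (g v)) ∨ (v ∈ A ∧ x ∈ B ∧ v ∈ P (g x)))
              ∧ ¬ G.Adj x v) := by
          rcases hx with ⟨h1, h2⟩ | ⟨h1, h2⟩
          · exact Or.inr ⟨Or.inl ⟨hxA, hv, h1⟩, fun h => h2 h.symm⟩
          · refine Or.inl ⟨h1.symm, ?_⟩
            rintro (⟨_, _, hP⟩ | ⟨hvA, _, _⟩)
            · exact h2 hP
            · exact hdisj v ⟨hvA, hv⟩
        rcases Sym2.eq_iff.mp he with ⟨rfl, rfl⟩ | ⟨rfl, rfl⟩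
        · exact key
        · rcases key with ⟨h1, h2⟩ | ⟨h1, h2⟩
          · exact Or.inl ⟨h1.symm, fun h => h2 (Or.symm h)⟩
          · exact Or.inr ⟨Or.symm h1, fun h => h2 h.symm⟩
  rw [hset, Set.ncard_coe_finset, hD, Finset.card_biUnion]
  · refine Finset.sum_congr rfl fun v hv => ?_
    rw [Finset.card_image_of_injOn (fun a _ b _ hab => by
      simpa using Sym2.congr_left.mp hab)]
    rw [symmDiff_def, Finset.sup_eq_union,
      Finset.card_union_of_disjoint (disjoint_sdiff_sdiff)]
  · intro v hv v' hv' hvv'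
    rw [Function.onFun, Finset.disjoint_left]
    intro e he1 he2
    rw [Finset.mem_image] at he1 he2
    obtain ⟨x, hx, rfl⟩ := he1
    obtain ⟨x', hx', he⟩ := he2
    have hxA' : x' ∈ A := by
      rcases Finset.mem_symmDiff.mp hx' with ⟨h1, _⟩ | ⟨h1, _⟩
      · exact hPsub _ h1
      · exact hN v' hv' x' h1
    rcases Sym2.eq_iff.mp he with ⟨_, h2⟩ | ⟨h1, h2⟩
    · exact hvv' h2.symm
    · exact hdisj v ⟨h1 ▸ hxA', hv⟩

/-- Greedy assignment is optimal for annotated bicluster editing: the minimum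
number of edge edits turning the bipartite graph `G = (A,B,E)` into a disjoint
union of `p` complete bipartite graphs with left sides exactly the parts `P i`
equals `∑_{v ∈ B} min_i (|A_i \ N(v)| + |N(v) \ A_i|)`. -/
theorem annotated_bicluster_optimal {V : Type*} [Fintype V] [DecidableEq V]
    (G : SimpleGraph V) [DecidableRel G.Adj] (A B : Finset V)
    (hdisj : ∀ x : V, ¬ (x ∈ A ∧ x ∈ B)) (hcover : ∀ x : V, x ∈ A ∨ x ∈ B)
    (hbip : ∀ u w, G.Adj u w → (u ∈ A ∧ w ∈ B) ∨ (u ∈ B ∧ w ∈ A))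
    (p : ℕ) (hp : 0 < p) (P : Fin p → Finset V)
    (hPsub : ∀ i, P i ⊆ A) (hPne : ∀ i, (P i).Nonempty)
    (hPdisj : ∀ i j, i ≠ j → Disjoint (P i) (P j))
    (hPcover : ∀ x ∈ A, ∃ i, x ∈ P i) :
    IsLeast
      {n : ℕ | ∃ g : V → Fin p,
        n = (symmDiff G.edgeSet (annotTarget A B P g hdisj).edgeSet).ncard}
      (∑ v ∈ B,
        Finset.univ.inf' (Finset.univ_nonempty_iff.mpr ⟨⟨0, hp⟩⟩)
          (fun i => (P i \ G.neighborFinset v).card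
            + (G.neighborFinset v \ P i).card)) := by
  classical
  constructor
  · choose gi h1 h2 using fun v : V =>
      Finset.exists_mem_eq_inf' (Finset.univ_nonempty_iff.mpr ⟨⟨0, hp⟩⟩)
        (fun i => (P i \ G.neighborFinset v).card + (G.neighborFinset v \ P i).card)
    refine ⟨gi, ?_⟩
    rw [annot_count G A B hdisj hbip P hPsub gi]
    exact Finset.sum_congr rfl fun v _ => h2 v
  · rintro n ⟨g, rfl⟩
    rw [annot_count G A B hdisj hbip P hPsub g]
    exact Finset.sum_le_sum fun v _ => Finset.inf'_le _ (Finset.mem_univ (g v))
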